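/- Let h⁺(x) for x ∈ [−r₊, r₊] be defined (in dimension 1) by h⁺(x) = u ∫_ℝ Φ(x,y) 1{y ≤ r₊}(Eι(y) − x) dy + u ∫_ℝ Φ(x,y) 1{y > r₊}(y − x) dy, where ι(y) = y and Eι(y) = y for |y| ≤ r₊. Assuming the two cancellation identities ∫_{−r₊}^{r₊}∫_{−r₊}^{r₊} Φ(x,y)(y−x) dy dx = 0 (by symmetry of Φ) and ∫_{−r₊}^{∞}∫_{−∞}^{−r₊} Φ(x,y)(Eι(y) − Eι(x)) dy dx = 0, one has (1/(2r₊)) ∫_{−r₊}^{r₊} h⁺(x) dx = (u/(2r₊)) ∫_{−∞}^{r₊} ∫_{r₊}^{∞} Φ(x,y)(y−x) dy dx = (u/(2r₊)) ∫₀^{2r₊} Φ(r₊, r₊+z) z² dz = σ₊²/(4r₊), where σ₊² = 2u r₊²/3. -/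

import Mathlib

open MeasureTheory Set intervalIntegral

noncomputable def Fker (rp rm x y : ℝ) : ℝ :=
  max (min (x+rp) (y+rp) - max (max (x-rp) 0) (max (y-rp) 0)) 0 / (2*rp)^2 +
  max (min (min (x+rm) 0) (min (y+rm) 0) - max (x-rm) (y-rm)) 0 / (2*rm)^2

lemma Fker_cont (rp rm : ℝ) : Continuous (fun p : ℝ×ℝ => Fker rp rm p.1 p.2) := by
  unfold Fker; fun_prop

lemma inter_eq_Ioo1 (r x y : ℝ) :
    ((Ioo (x-r) (x+r) ∩ Ioi (0:ℝ)) ∩ (Ioo (y-r) (y+r) ∩ Ioi (0:ℝ))) =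
      Ioo (max (max (x-r) 0) (max (y-r) 0)) (min (x+r) (y+r)) := by
  ext t
  simp only [mem_inter_iff, mem_Ioo, mem_Ioi, max_lt_iff, lt_min_iff]
  tauto

lemma inter_eq_Ioo2 (r x y : ℝ) :
    ((Ioo (x-r) (x+r) ∩ Iio (0:ℝ)) ∩ (Ioo (y-r) (y+r) ∩ Iio (0:ℝ))) =
      Ioo (max (x-r) (y-r)) (min (min (x+r) 0) (min (y+r) 0)) := by
  ext t
  simp only [mem_inter_iff, mem_Ioo, mem_Iio, max_lt_iff, lt_min_iff]
  tauto

lemma Phi_eq {rp rm : ℝ} (Φ : ℝ → ℝ → ℝ)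
    (hΦ : ∀ x y, Φ x y =
      (volume ((Metric.ball x rp ∩ Ioi (0:ℝ)) ∩ (Metric.ball y rp ∩ Ioi (0:ℝ)))).toReal
        / (2 * rp) ^ 2 +
      (volume ((Metric.ball x rm ∩ Iio (0:ℝ)) ∩ (Metric.ball y rm ∩ Iio (0:ℝ)))).toReal
        / (2 * rm) ^ 2) (x y : ℝ) : Φ x y = Fker rp rm x y := by
  rw [hΦ, Fker]
  rw [Real.ball_eq_Ioo, Real.ball_eq_Ioo, Real.ball_eq_Ioo, Real.ball_eq_Ioo,
    inter_eq_Ioo1, inter_eq_Ioo2, Real.volume_Ioo, Real.volume_Ioo,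
    ENNReal.toReal_ofReal', ENNReal.toReal_ofReal']


variable {rp rm : ℝ}

lemma FkerK1 (hrm : 0 < rm) (hrr : rm ≤ rp) {z : ℝ} (hz : 0 ≤ z) :
    Fker rp rm rp (rp+z) = max (2*rp - z) 0 / (2*rp)^2 := by
  have hrp : 0 < rp := hrm.trans_le hrr
  unfold Fker
  rw [min_eq_left (by linarith), show max (rp - rp) 0 = 0 by simp,
    show max (rp+z-rp) 0 = z by rw [max_eq_left] <;> linarith,
    max_eq_right hz,
    min_eq_right (by linarith : (0:ℝ) ≤ rp + rm),
    min_eq_right (by linarith : (0:ℝ) ≤ rp + z + rm),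
    min_self,
    max_eq_right (by linarith : rp - rm ≤ rp + z - rm),
    max_eq_right (by linarith : (0:ℝ) - (rp + z - rm) ≤ 0),
    show rp + rp - z = 2*rp - z by ring]
  simp

lemma FkerK2 (hrm : 0 < rm) (hrr : rm ≤ rp) {x y : ℝ} (hx : rp < x) (hy : y ≤ -rp) :
    Fker rp rm x y = 0 := by
  have hrp : 0 < rp := hrm.trans_le hrr
  unfold Fker
  rw [max_eq_right, max_eq_right]
  · simp
  · have h1 : min (min (x+rm) 0) (min (y+rm) 0) ≤ 0 := le_trans (min_le_left _ _) (min_le_right _ _)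
    have h2 : x - rm ≤ max (x-rm) (y-rm) := le_max_left _ _
    linarith
  · have h1 : min (x+rp) (y+rp) ≤ y + rp := min_le_right _ _
    have h2 : (0:ℝ) ≤ max (max (x-rp) 0) (max (y-rp) 0) := le_max_of_le_left (le_max_right _ _)
    linarith

lemma FkerK3 (hrm : 0 < rm) (hrr : rm ≤ rp) {x y : ℝ} (hx1 : -rp ≤ x) (hx2 : x ≤ rp)
    (hy : rp ≤ y) : Fker rp rm x y = max (x + 2*rp - y) 0 / (2*rp)^2 := by
  have hrp : 0 < rp := hrm.trans_le hrr
  unfold Fker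
  have hmin : min (min (x+rm) 0) (min (y+rm) 0) ≤ 0 := le_trans (min_le_left _ _) (min_le_right _ _)
  rw [min_eq_left (by linarith),
    show max (x-rp) 0 = 0 by rw [max_eq_right]; linarith,
    show max (y-rp) 0 = y - rp by rw [max_eq_left]; linarith,
    max_eq_right (by linarith : (0:ℝ) ≤ y - rp),
    show x + rp - (y - rp) = x + 2*rp - y by ring,
    max_eq_right (show x - rm ≤ y - rm by linarith),
    max_eq_right (show min (min (x+rm) 0) (min (y+rm) 0) - (y - rm) ≤ 0 from by linarith)]
  simp

lemma Fker_nonneg (hrm : 0 < rm) (hrr : rm ≤ rp) (x y : ℝ) : 0 ≤ Fker rp rm x y := by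
  have hrp : 0 < rp := hrm.trans_le hrr
  unfold Fker
  positivity

lemma Fker_le (hrm : 0 < rm) (hrr : rm ≤ rp) (x y : ℝ) :
    Fker rp rm x y ≤ 1/(2*rp) + 1/(2*rm) := by
  have hrp : 0 < rp := hrm.trans_le hrr
  unfold Fker
  have h1 : max (min (x+rp) (y+rp) - max (max (x-rp) 0) (max (y-rp) 0)) 0 ≤ 2*rp := by
    apply max_le _ (by linarith)
    have := min_le_left (x+rp) (y+rp)
    have : x - rp ≤ max (max (x-rp) 0) (max (y-rp) 0) := le_max_of_le_left (le_max_left _ _)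
    have := min_le_left (x+rp) (y+rp)
    linarith
  have h2 : max (min (min (x+rm) 0) (min (y+rm) 0) - max (x-rm) (y-rm)) 0 ≤ 2*rm := by
    apply max_le _ (by linarith)
    have ha : min (min (x+rm) 0) (min (y+rm) 0) ≤ x + rm := le_trans (min_le_left _ _) (min_le_left _ _)
    have hb : x - rm ≤ max (x-rm) (y-rm) := le_max_left _ _
    linarith
  have e1 : 2*rp / (2*rp)^2 = 1/(2*rp) := by field_simp
  have e2 : 2*rm / (2*rm)^2 = 1/(2*rm) := by field_simp
  calc _ ≤ 2*rp/(2*rp)^2 + 2*rm/(2*rm)^2 := by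
        gcongr <;> positivity
    _ = _ := by rw [e1, e2]

lemma Fker_supp (hrm : 0 < rm) (hrr : rm ≤ rp) {x y : ℝ} (h : 2*rp ≤ |x - y|) :
    Fker rp rm x y = 0 := by
  have hrp : 0 < rp := hrm.trans_le hrr
  have hc : 2*rp ≤ x - y ∨ 2*rp ≤ y - x := by
    rcases abs_cases (x - y) with ⟨h1, _⟩ | ⟨h1, _⟩
    · left; linarith
    · right; linarith
  unfold Fker
  have ha1 : min (x+rp) (y+rp) ≤ x + rp := min_le_left _ _
  have ha2 : min (x+rp) (y+rp) ≤ y + rp := min_le_right _ _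
  have hb1 : x - rp ≤ max (max (x-rp) 0) (max (y-rp) 0) := le_max_of_le_left (le_max_left _ _)
  have hb2 : y - rp ≤ max (max (x-rp) 0) (max (y-rp) 0) := le_max_of_le_right (le_max_left _ _)
  have hc1 : min (min (x+rm) 0) (min (y+rm) 0) ≤ x + rm :=
    le_trans (min_le_left _ _) (min_le_left _ _)
  have hc2 : min (min (x+rm) 0) (min (y+rm) 0) ≤ y + rm :=
    le_trans (min_le_right _ _) (min_le_left _ _)
  have hd1 : x - rm ≤ max (x-rm) (y-rm) := le_max_left _ _
  have hd2 : y - rm ≤ max (x-rm) (y-rm) := le_max_right _ _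
  rw [max_eq_right, max_eq_right]
  · simp
  · rcases hc with h' | h' <;> linarith
  · rcases hc with h' | h' <;> linarith

lemma Fker_mul_bound (hrm : 0 < rm) (hrr : rm ≤ rp) (x y : ℝ) :
    ‖Fker rp rm x y * (y - x)‖ ≤ (1/(2*rp)+1/(2*rm)) * (2*rp) := by
  have hrp : 0 < rp := hrm.trans_le hrr
  rcases le_or_gt (|x - y|) (2*rp) with h | h
  · rw [norm_mul, Real.norm_eq_abs, Real.norm_eq_abs,
      abs_of_nonneg (Fker_nonneg hrm hrr x y)]
    have h2 : |y - x| ≤ 2*rp := by rw [abs_sub_comm]; exact h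
    exact mul_le_mul (Fker_le hrm hrr x y) h2 (abs_nonneg _)
      (by positivity)
  · rw [Fker_supp hrm hrr (le_of_lt h), zero_mul, norm_zero]
    positivity

lemma inner_calc (hrp : 0 < rp) (x : ℝ) :
    ∫ y in rp..(x+2*rp), (x+2*rp-y)*(y-x)/(2*rp)^2
      = (2/3*rp^3 + rp^2*x - x^3/3)/(2*rp)^2 := by
  have hD : ∀ y ∈ uIcc rp (x+2*rp), HasDerivAt
      (fun t : ℝ => (-(t^3)/3 + (x+rp)*t^2 - (x^2+2*rp*x)*t)/(2*rp)^2)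
      ((x+2*rp-y)*(y-x)/(2*rp)^2) y := by
    intro y _
    have h1 := ((((hasDerivAt_pow 3 y).neg.div_const 3).add
      ((hasDerivAt_pow 2 y).const_mul (x+rp))).sub
      ((hasDerivAt_id' y).const_mul (x^2+2*rp*x))).div_const ((2*rp)^2)
    refine h1.congr_deriv ?_
    push_cast
    ring
  rw [intervalIntegral.integral_eq_sub_of_hasDerivAt hD (Continuous.intervalIntegrable (by fun_prop) _ _)]
  ring

lemma outer_calc (hrp : 0 < rp) :
    ∫ x in (-rp)..rp, (2/3*rp^3 + rp^2*x - x^3/3)/(2*rp)^2 = rp^2/3 := by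
  have hD : ∀ x ∈ uIcc (-rp) rp, HasDerivAt
      (fun t : ℝ => (2/3*rp^3*t + rp^2*t^2/2 - t^4/12)/(2*rp)^2)
      ((2/3*rp^3 + rp^2*x - x^3/3)/(2*rp)^2) x := by
    intro x _
    have h1 := ((((hasDerivAt_id' x).const_mul (2/3*rp^3)).add
      (((hasDerivAt_pow 2 x).const_mul (rp^2)).div_const 2)).sub
      ((hasDerivAt_pow 4 x).div_const 12)).div_const ((2*rp)^2)
    refine h1.congr_deriv ?_
    push_cast
    ring
  rw [intervalIntegral.integral_eq_sub_of_hasDerivAt hD (Continuous.intervalIntegrable (by fun_prop) _ _)]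
  have h2 : (2*rp)^2 ≠ 0 := by positivity
  field_simp
  ring

lemma J_calc (hrp : 0 < rp) :
    ∫ z in (0:ℝ)..(2*rp), (2*rp-z)*z^2/(2*rp)^2 = rp^2/3 := by
  have hD : ∀ z ∈ uIcc (0:ℝ) (2*rp), HasDerivAt
      (fun t : ℝ => (2*rp*t^3/3 - t^4/4)/(2*rp)^2)
      ((2*rp-z)*z^2/(2*rp)^2) z := by
    intro z _
    have h1 := ((((hasDerivAt_pow 3 z).const_mul (2*rp)).div_const 3).sub
      ((hasDerivAt_pow 4 z).div_const 4)).div_const ((2*rp)^2)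
    refine h1.congr_deriv ?_
    push_cast
    ring
  rw [intervalIntegral.integral_eq_sub_of_hasDerivAt hD (Continuous.intervalIntegrable (by fun_prop) _ _)]
  have h2 : (2*rp)^2 ≠ 0 := by positivity
  field_simp
  ring


/-- Average of `h⁺` against the uniform measure on `[−r₊,r₊]` in dimension one:
assuming the two cancellation identities, one has
`(1/(2r₊)) ∫_{−r₊}^{r₊} h⁺(x) dx = (u/(2r₊)) ∫₀^{2r₊} Φ(r₊,r₊+z) z² dz = σ₊²/(4r₊)`
with `σ₊² = 2u r₊²/3`. -/
theorem stmt18 (rm rp u : ℝ) (hrm : 0 < rm) (hrr : rm ≤ rp)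
    (hu : 0 < u) (hu1 : u ≤ 1)
    (Φ : ℝ → ℝ → ℝ)
    (hΦ : ∀ x y, Φ x y =
      (volume ((Metric.ball x rp ∩ Ioi (0:ℝ)) ∩ (Metric.ball y rp ∩ Ioi (0:ℝ)))).toReal
        / (2 * rp) ^ 2 +
      (volume ((Metric.ball x rm ∩ Iio (0:ℝ)) ∩ (Metric.ball y rm ∩ Iio (0:ℝ)))).toReal
        / (2 * rm) ^ 2)
    (Eiota : ℝ → ℝ) (hEmeas : Measurable Eiota)
    (hEid : ∀ y : ℝ, |y| ≤ rp → Eiota y = y)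
    (hEb : ∀ y : ℝ, |Eiota y| ≤ rp)
    (hplus : ℝ → ℝ)
    (hhplus : ∀ x : ℝ, hplus x =
      u * (∫ y in Iic rp, Φ x y * (Eiota y - x)) +
      u * (∫ y in Ioi rp, Φ x y * (y - x)))
    (hint1 : ∀ x ∈ Icc (-rp) rp, IntegrableOn (fun y => Φ x y * (Eiota y - x)) (Iic rp))
    (hint2 : ∀ x ∈ Icc (-rp) rp, IntegrableOn (fun y => Φ x y * (y - x)) (Ioi rp))
    (hintH : IntegrableOn hplus (Icc (-rp) rp))
    (hcancel1 : ∫ x in Icc (-rp) rp, ∫ y in Icc (-rp) rp, Φ x y * (y - x) = 0)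
    (hcancel2 : ∫ x in Ici (-rp), ∫ y in Iic (-rp), Φ x y * (Eiota y - Eiota x) = 0) :
    (1 / (2 * rp)) * ∫ x in Icc (-rp) rp, hplus x =
        (u / (2 * rp)) * ∫ z in (0:ℝ)..(2 * rp), Φ rp (rp + z) * z ^ 2 ∧
      (u / (2 * rp)) * ∫ z in (0:ℝ)..(2 * rp), Φ rp (rp + z) * z ^ 2 =
        (2 * u * rp ^ 2 / 3) / (4 * rp) := by
  have hrp : 0 < rp := hrm.trans_le hrr
  have hu' : u ≠ 0 := ne_of_gt hu
  have PhiF : ∀ x y, Φ x y = Fker rp rm x y := Phi_eq Φ hΦ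
  simp only [PhiF] at hhplus hint1 hint2 hcancel1 hcancel2 ⊢
  -- the three inner-integral functions
  set Ψ : ℝ → ℝ := fun x => ∫ y in Iic (-rp), Fker rp rm x y * (Eiota y - Eiota x) with hΨdef
  set A2 : ℝ → ℝ := fun x => ∫ y in Icc (-rp) rp, Fker rp rm x y * (y - x) with hA2def
  set A3 : ℝ → ℝ := fun x => ∫ y in Ioi rp, Fker rp rm x y * (y - x) with hA3def
  -- pointwise decomposition of hplus on Icc
  have hdecomp : ∀ x ∈ Icc (-rp) rp, hplus x = u * Ψ x + u * A2 x + u * A3 x := by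
    intro x hx
    obtain ⟨hx1, hx2⟩ := hx
    have hEx : Eiota x = x := hEid x (abs_le.mpr ⟨by linarith, hx2⟩)
    rw [hhplus]
    have hsplit : (∫ y in Iic rp, Fker rp rm x y * (Eiota y - x))
        = (∫ y in Iic (-rp), Fker rp rm x y * (Eiota y - x))
          + ∫ y in Ioc (-rp) rp, Fker rp rm x y * (Eiota y - x) := by
      rw [← setIntegral_union (Iic_disjoint_Ioc le_rfl) measurableSet_Ioc
        ((hint1 x ⟨hx1, hx2⟩).mono_set (Iic_subset_Iic.mpr (by linarith)))
        ((hint1 x ⟨hx1, hx2⟩).mono_set Ioc_subset_Iic_self),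
        Iic_union_Ioc_eq_Iic (by linarith)]
    have h1 : (∫ y in Iic (-rp), Fker rp rm x y * (Eiota y - x)) = Ψ x := by
      simp only [hΨdef]
      rw [hEx]
    have h2 : (∫ y in Ioc (-rp) rp, Fker rp rm x y * (Eiota y - x)) = A2 x := by
      simp only [hA2def]
      rw [integral_Icc_eq_integral_Ioc]
      exact setIntegral_congr_fun measurableSet_Ioc
        (fun y hy => by rw [hEid y (abs_le.mpr ⟨le_of_lt hy.1, hy.2⟩)])
    rw [hsplit, h1, h2]
    ring
  -- closed form for A3 on Icc
  have hA3eq : ∀ x ∈ Icc (-rp) rp, A3 x = (2/3*rp^3 + rp^2*x - x^3/3)/(2*rp)^2 := by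
    intro x hx
    obtain ⟨hx1, hx2⟩ := hx
    have hb : rp ≤ x + 2*rp := by linarith
    have hcont : Continuous (fun y : ℝ => max (x+2*rp-y) 0 * (y-x) / (2*rp)^2) := by fun_prop
    calc A3 x = ∫ y in Ioi rp, max (x+2*rp-y) 0 * (y-x) / (2*rp)^2 := by
          refine setIntegral_congr_fun measurableSet_Ioi (fun y hy => ?_)
          rw [FkerK3 hrm hrr hx1 hx2 (le_of_lt hy)]
          ring
      _ = (∫ y in Ioc rp (x+2*rp), max (x+2*rp-y) 0 * (y-x) / (2*rp)^2)
            + ∫ y in Ioi (x+2*rp), max (x+2*rp-y) 0 * (y-x) / (2*rp)^2 := by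
          rw [← setIntegral_union (Ioc_disjoint_Ioi le_rfl) measurableSet_Ioi
            (hcont.integrableOn_Ioc)
            (IntegrableOn.congr_fun (integrableOn_zero)
              (fun y hy => by
                rw [max_eq_right (by simp only [mem_Ioi] at hy; linarith : x+2*rp-y ≤ 0)]
                simp) measurableSet_Ioi),
            Ioc_union_Ioi_eq_Ioi hb]
      _ = ∫ y in Ioc rp (x+2*rp), (x+2*rp-y) * (y-x) / (2*rp)^2 := by
          have hz : (∫ y in Ioi (x+2*rp), max (x+2*rp-y) 0 * (y-x) / (2*rp)^2) = 0 :=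
            setIntegral_eq_zero_of_forall_eq_zero (fun y hy => by
              rw [max_eq_right (by simp only [mem_Ioi] at hy; linarith : x+2*rp-y ≤ 0)]
              simp)
          rw [hz, add_zero]
          exact setIntegral_congr_fun measurableSet_Ioc
            (fun y hy => by rw [max_eq_left (by linarith [hy.2] : (0:ℝ) ≤ x+2*rp-y)])
      _ = ∫ y in rp..(x+2*rp), (x+2*rp-y) * (y-x) / (2*rp)^2 :=
          (intervalIntegral.integral_of_le hb).symm
      _ = _ := inner_calc hrp x
  have hpcont : Continuous (fun x : ℝ => (2/3*rp^3 + rp^2*x - x^3/3)/(2*rp)^2) := by fun_prop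
  have hA3int : IntegrableOn A3 (Icc (-rp) rp) :=
    IntegrableOn.congr_fun hpcont.integrableOn_Icc
      (fun x hx => (hA3eq x hx).symm) measurableSet_Icc
  -- A2 integrable on Icc
  have hA2meas : AEStronglyMeasurable A2 (volume.restrict (Icc (-rp) rp)) := by
    have : A2 = fun x => ∫ y, (fun p : ℝ × ℝ => Fker rp rm p.1 p.2 * (p.2 - p.1)) (x, y)
        ∂(volume.restrict (Icc (-rp) rp)) := rfl
    rw [this]
    exact (((Fker_cont rp rm).mul (continuous_snd.sub continuous_fst)).aestronglyMeasurable.integral_prod_right').restrict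
  have hCb : ∀ x y : ℝ, ‖Fker rp rm x y * (y - x)‖ ≤ (1/(2*rp)+1/(2*rm)) * (2*rp) :=
    Fker_mul_bound hrm hrr
  have hA2bdd : ∀ x : ℝ, ‖A2 x‖ ≤ ((1/(2*rp)+1/(2*rm)) * (2*rp)) * (volume (Icc (-rp) rp)).toReal := by
    intro x
    exact norm_setIntegral_le_of_norm_le_const (measure_Icc_lt_top) (fun y _ => hCb x y)
  have hA2int : IntegrableOn A2 (Icc (-rp) rp) := by
    refine Integrable.mono' (g := fun _ => (1/(2*rp)+1/(2*rm)) * (2*rp) * (volume (Icc (-rp) rp)).toReal)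
      (integrableOn_const measure_Icc_lt_top.ne) hA2meas ?_
    exact Filter.Eventually.of_forall hA2bdd
  -- Ψ integrable on Icc
  have hΨint : IntegrableOn Ψ (Icc (-rp) rp) := by
    refine IntegrableOn.congr_fun (((hintH.div_const u).sub hA2int).sub hA3int)
      (fun x hx => ?_) measurableSet_Icc
    have h := hdecomp x hx
    show hplus x / u - A2 x - A3 x = Ψ x
    rw [h]
    field_simp
    ring
  -- ∫ Ψ over Icc is zero via hcancel2
  have hΨIoi0 : ∀ x ∈ Ioi rp, Ψ x = 0 := fun x hx =>
    setIntegral_eq_zero_of_forall_eq_zero (fun y hy => by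
      rw [FkerK2 hrm hrr hx hy, zero_mul])
  have hΨIoiInt : IntegrableOn Ψ (Ioi rp) :=
    IntegrableOn.congr_fun integrableOn_zero
      (fun x hx => (hΨIoi0 x hx).symm) measurableSet_Ioi
  have hdisj : Disjoint (Icc (-rp) rp) (Ioi rp) :=
    Set.disjoint_left.mpr (fun a ha hb => absurd hb (not_lt.mpr ha.2))
  have hΨ0 : (∫ x in Icc (-rp) rp, Ψ x) = 0 := by
    have hsplit2 := setIntegral_union hdisj measurableSet_Ioi hΨint hΨIoiInt
    rw [Icc_union_Ioi_eq_Ici (by linarith : -rp ≤ rp)] at hsplit2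
    have h3 : (∫ x in Ioi rp, Ψ x) = 0 := setIntegral_eq_zero_of_forall_eq_zero hΨIoi0
    rw [hcancel2, h3] at hsplit2
    linarith
  -- ∫ A3 over Icc
  have hA3val : (∫ x in Icc (-rp) rp, A3 x) = rp^2/3 := by
    rw [setIntegral_congr_fun measurableSet_Icc hA3eq, integral_Icc_eq_integral_Ioc,
      ← intervalIntegral.integral_of_le (by linarith : -rp ≤ rp)]
    exact outer_calc hrp
  -- total integral of hplus
  have htot : (∫ x in Icc (-rp) rp, hplus x) = u * (rp^2/3) := by
    have hfg : Integrable (fun x => u * Ψ x + u * A2 x) (volume.restrict (Icc (-rp) rp)) :=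
      (hΨint.const_mul u).add (hA2int.const_mul u)
    have hf3 : Integrable (fun x => u * A3 x) (volume.restrict (Icc (-rp) rp)) :=
      hA3int.const_mul u
    rw [setIntegral_congr_fun measurableSet_Icc hdecomp,
      integral_add hfg hf3, integral_add (hΨint.const_mul u) (hA2int.const_mul u),
      MeasureTheory.integral_const_mul, MeasureTheory.integral_const_mul, MeasureTheory.integral_const_mul,
      hΨ0, hcancel1, hA3val]
    ring
  -- value of the z-integral
  have hJ : (∫ z in (0:ℝ)..(2*rp), Fker rp rm rp (rp+z) * z^2) = rp^2/3 := by
    have hEq : EqOn (fun z => Fker rp rm rp (rp+z) * z^2)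
        (fun z => (2*rp-z)*z^2/(2*rp)^2) (uIcc 0 (2*rp)) := by
      intro z hz
      rw [uIcc_of_le (by linarith : (0:ℝ) ≤ 2*rp)] at hz
      show Fker rp rm rp (rp+z) * z^2 = (2*rp-z)*z^2/(2*rp)^2
      rw [FkerK1 hrm hrr hz.1, max_eq_left (by linarith [hz.2] : (0:ℝ) ≤ 2*rp - z)]
      ring
    rw [intervalIntegral.integral_congr hEq]
    exact J_calc hrp
  constructor
  · rw [htot, hJ]
    ring
  · rw [hJ]
    field_simp
    ring
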